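/- Let μ be a discrete probability measure on ℝ whose atoms are contained in a lattice {a + b·l : l ∈ ℤ} for some a ∈ ℝ and b > 0, and suppose its characteristic function f satisfies f(t) ≠ 0 for all t ∈ ℝ. Then inf_{t∈ℝ} |f(t)| > 0. -/

import Mathlib

open MeasureTheory Complex

/-- A discrete probability measure supported on a lattice `{a + b·l : l ∈ ℤ}`
whose characteristic function has no zeroes has characteristic function separated from zero. -/
theorem lattice_nonvanishing_charFun_separated_from_zero
    (μ : Measure ℝ) [IsProbabilityMeasure μ]
    (hdiscrete : ∃ s : Set ℝ, s.Countable ∧ μ sᶜ = 0)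
    (a b : ℝ) (hb : 0 < b)
    (hlattice : ∀ x : ℝ, 0 < μ {x} → ∃ l : ℤ, x = a + b * (l : ℝ))
    (f : ℝ → ℂ)
    (hf : ∀ t : ℝ, f t = ∫ x : ℝ, Complex.exp (Complex.I * (t : ℂ) * (x : ℂ)) ∂μ)
    (hnz : ∀ t : ℝ, f t ≠ 0) :
    ∃ c : ℝ, 0 < c ∧ ∀ t : ℝ, c ≤ ‖f t‖ := by
  obtain ⟨s, hsc, hs0⟩ := hdiscrete
  set L : Set ℝ := {x | ∃ l : ℤ, x = a + b * (l : ℝ)} with hL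
  -- μ-a.e. x lies in the lattice
  have haeL : ∀ᵐ x ∂μ, x ∈ L := by
    rw [ae_iff]
    have hsub : {x | ¬ x ∈ L} ⊆ (Lᶜ ∩ s) ∪ sᶜ := by
      intro x hx
      by_cases hxs : x ∈ s
      · exact Or.inl ⟨hx, hxs⟩
      · exact Or.inr hxs
    have hcount : (Lᶜ ∩ s).Countable := hsc.mono Set.inter_subset_right
    have h1 : μ (Lᶜ ∩ s) = 0 := by
      have : (Lᶜ ∩ s) = ⋃ x ∈ (Lᶜ ∩ s), {x} := by ext y; simp
      rw [this, measure_biUnion_null_iff hcount]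
      intro x hx
      by_contra h
      exact hx.1 (hlattice x (pos_iff_ne_zero.mpr h))
    refine le_antisymm ?_ zero_le
    calc μ {x | ¬ x ∈ L} ≤ μ ((Lᶜ ∩ s) ∪ sᶜ) := measure_mono hsub
      _ ≤ μ (Lᶜ ∩ s) + μ sᶜ := measure_union_le _ _
      _ = 0 := by simp [h1, hs0]
  -- integrability of the integrand
  have hint : ∀ t : ℝ, Integrable (fun x : ℝ => Complex.exp (Complex.I * (t : ℂ) * (x : ℂ))) μ := by
    intro t
    have hcont : Continuous fun x : ℝ => Complex.exp (Complex.I * (t : ℂ) * (x : ℂ)) := by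
      continuity
    refine (integrable_const (1 : ℝ)).mono' hcont.aestronglyMeasurable ?_
    filter_upwards with x
    have : Complex.I * (t : ℂ) * (x : ℂ) = ((t * x : ℝ) : ℂ) * Complex.I := by
      push_cast; ring
    rw [this, Complex.norm_exp_ofReal_mul_I]
  -- periodicity of |f| with period T = 2π/b
  set T : ℝ := 2 * Real.pi / b with hT
  have hTpos : 0 < T := div_pos (by positivity) hb
  have hper : Function.Periodic (fun t => ‖f t‖) T := by
    intro t
    simp only
    have key : f (t + T) = Complex.exp (Complex.I * (T : ℂ) * (a : ℂ)) * f t := by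
      rw [hf, hf]
      rw [← integral_const_mul]
      refine integral_congr_ae ?_
      filter_upwards [haeL] with x hx
      obtain ⟨l, rfl⟩ := hx
      have hTb : (T : ℂ) * (b : ℂ) = 2 * (Real.pi : ℂ) := by
        have hb' : (b : ℂ) ≠ 0 := by exact_mod_cast hb.ne'
        rw [hT]; push_cast; field_simp
      have harg : Complex.I * ((t + T : ℝ) : ℂ) * ((a + b * (l : ℝ) : ℝ) : ℂ)
          = Complex.I * (T : ℂ) * (a : ℂ) + (l : ℂ) * (2 * (Real.pi : ℂ) * Complex.I)
            + Complex.I * (t : ℂ) * ((a + b * (l : ℝ) : ℝ) : ℂ) := by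
        push_cast
        linear_combination (Complex.I * (l : ℂ)) * hTb
      rw [harg, Complex.exp_add, Complex.exp_add, Complex.exp_int_mul_two_pi_mul_I, mul_one]
    rw [key, norm_mul]
    have : Complex.I * (T : ℂ) * (a : ℂ) = ((T * a : ℝ) : ℂ) * Complex.I := by
      push_cast; ring
    rw [this, Complex.norm_exp_ofReal_mul_I, one_mul]
  -- continuity of f
  have hfc : Continuous f := by
    have : Continuous fun t : ℝ => ∫ x : ℝ, Complex.exp (Complex.I * (t : ℂ) * (x : ℂ)) ∂μ := by
      refine continuous_of_dominated (bound := fun _ => (1 : ℝ))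
        (fun t => ((hint t).aestronglyMeasurable)) ?_ (integrable_const 1) ?_
      · intro t
        filter_upwards with x
        have : Complex.I * (t : ℂ) * (x : ℂ) = ((t * x : ℝ) : ℂ) * Complex.I := by
          push_cast; ring
        rw [this, Complex.norm_exp_ofReal_mul_I]
      · filter_upwards with x
        continuity
    exact this.congr fun t => (hf t).symm
  -- minimum over a period
  have hcomp : IsCompact (Set.Icc (0 : ℝ) T) := isCompact_Icc
  obtain ⟨t₀, ht₀mem, ht₀min⟩ := hcomp.exists_isMinOn (Set.nonempty_Icc.mpr hTpos.le)
    (continuous_norm.comp hfc).continuousOn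
  refine ⟨‖f t₀‖, norm_pos_iff.mpr (hnz t₀), ?_⟩
  intro t
  obtain ⟨t', ht'mem, ht'eq⟩ := hper.exists_mem_Ico₀ hTpos t
  have h := ht₀min (Set.Ico_subset_Icc_self ht'mem)
  calc ‖f t₀‖ ≤ ‖f t'‖ := h
    _ = ‖f t‖ := ht'eq.symm
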